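/- Let f be a probability density on ℝ with ∫_{1/2}^∞ dy/(y³ f(y)) < ∞, and for each integer n ≥ 1 set q_n := ∫_{n−1/2}^{n+1/2} f(y) dy. Then q_n > 0 for all n ≥ 1 and ∑_{n≥1} 1/((n + 1/2)³ q_n) ≤ ∫_{1/2}^∞ dy/(y³ f(y)) < ∞. -/

import Mathlib

open MeasureTheory Filter
open scoped ENNReal

lemma jensen_inv (a b : ℝ) (hb : b = a + 1) (F : ℝ → ℝ)
    (hF : Measurable F) (h0 : ∀ y, 0 ≤ F y)
    (hint : IntegrableOn F (Set.Ico a b)) :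
    (ENNReal.ofReal (∫ y in Set.Ico a b, F y))⁻¹
      ≤ ∫⁻ y in Set.Ico a b, (ENNReal.ofReal (F y))⁻¹ := by
  set μ : Measure ℝ := volume.restrict (Set.Ico a b) with hμdef
  have hμuniv : μ Set.univ = 1 := by
    rw [hμdef, Measure.restrict_apply_univ, Real.volume_Ico, hb]
    norm_num
  set h : ℝ → ℝ≥0∞ := fun y => ENNReal.ofReal (F y) with hh
  set A : ℝ≥0∞ := ∫⁻ y, h y ∂μ with hAdef
  set B : ℝ≥0∞ := ∫⁻ y, (h y)⁻¹ ∂μ with hBdef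
  have hA : A = ENNReal.ofReal (∫ y, F y ∂μ) :=
    (ofReal_integral_eq_lintegral_ofReal hint (ae_of_all _ h0)).symm
  have hmeas : Measurable h := hF.ennreal_ofReal
  show (ENNReal.ofReal (∫ y, F y ∂μ))⁻¹ ≤ B
  rw [← hA]
  by_cases hB : B = ⊤
  · rw [hB]; exact le_top
  -- a.e. positivity
  have hae : ∀ᵐ y ∂μ, 0 < F y := by
    by_contra hc
    apply hB
    have ht : μ {y | F y ≤ 0} ≠ 0 := by
      intro h0'
      apply hc
      rw [ae_iff]
      convert h0' using 2
      ext y; simp [not_lt]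
    have hts : MeasurableSet {y : ℝ | F y ≤ 0} := measurableSet_le hF measurable_const
    have hEq : ∫⁻ y in {y | F y ≤ 0}, (h y)⁻¹ ∂μ = ∫⁻ _ in {y | F y ≤ 0}, (⊤ : ℝ≥0∞) ∂μ := by
      apply setLIntegral_congr_fun hts
      intro y hy
      have : F y = 0 := le_antisymm hy (h0 y)
      simp [hh, this]
    have : ∫⁻ y in {y | F y ≤ 0}, (h y)⁻¹ ∂μ = ⊤ := by
      rw [hEq, setLIntegral_const, ENNReal.top_mul ht]
    exact top_le_iff.mp (this ▸ setLIntegral_le_lintegral _ _)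
  have haene : ∀ᵐ y ∂μ, h y ≠ 0 := by
    filter_upwards [hae] with y hy
    simp [hh, ENNReal.ofReal_eq_zero, not_le, hy]
  -- Cauchy-Schwarz
  have hconj : (2:ℝ).HolderConjugate 2 := by
    rw [Real.holderConjugate_iff]; constructor <;> norm_num
  have hCS := ENNReal.lintegral_mul_le_Lp_mul_Lq μ hconj
    (f := fun y => (h y) ^ ((2:ℝ)⁻¹)) (g := fun y => ((h y)⁻¹) ^ ((2:ℝ)⁻¹))
    (hmeas.pow_const _).aemeasurable ((hmeas.inv).pow_const _).aemeasurable
  have hsimp : ∀ x : ℝ≥0∞, (x ^ ((2:ℝ)⁻¹)) ^ (2:ℝ) = x := by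
    intro x
    rw [← ENNReal.rpow_mul]
    norm_num
  have hone : (1 : ℝ≥0∞) ≤ A ^ ((2:ℝ)⁻¹) * B ^ ((2:ℝ)⁻¹) := by
    have hptwise : ∀ᵐ y ∂μ, (1 : ℝ≥0∞) =
        ((fun y => (h y) ^ ((2:ℝ)⁻¹)) * fun y => ((h y)⁻¹) ^ ((2:ℝ)⁻¹)) y := by
      filter_upwards [haene] with y hy
      have hne : h y ≠ ⊤ := by simp [hh]
      simp only [Pi.mul_apply]
      rw [← ENNReal.mul_rpow_of_ne_top hne (by simp [hy]),
        ENNReal.mul_inv_cancel hy hne, ENNReal.one_rpow]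
    have h1 : (1 : ℝ≥0∞) = ∫⁻ y, ((fun y => (h y) ^ ((2:ℝ)⁻¹)) *
        fun y => ((h y)⁻¹) ^ ((2:ℝ)⁻¹)) y ∂μ := by
      rw [← lintegral_congr_ae hptwise, lintegral_one, hμuniv]
    calc (1 : ℝ≥0∞) = _ := h1
      _ ≤ _ := hCS
      _ = A ^ ((2:ℝ)⁻¹) * B ^ ((2:ℝ)⁻¹) := by
          simp only [hsimp]
          norm_num
          rfl
  have hone' : (1 : ℝ≥0∞) ≤ A * B := by
    have := ENNReal.rpow_le_rpow hone (by norm_num : (0:ℝ) ≤ 2)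
    rwa [ENNReal.one_rpow,
      ENNReal.mul_rpow_of_nonneg _ _ (by norm_num : (0:ℝ) ≤ 2),
      hsimp, hsimp] at this
  have hAne_top : A ≠ ⊤ := by rw [hA]; exact ENNReal.ofReal_ne_top
  have hAne : A ≠ 0 := by
    intro hA0
    rw [hA0, zero_mul] at hone'
    exact (not_le.mpr zero_lt_one) hone'
  calc A⁻¹ = A⁻¹ * 1 := (mul_one _).symm
    _ ≤ A⁻¹ * (A * B) := by gcongr
    _ = (A⁻¹ * A) * B := (mul_assoc _ _ _).symm
    _ = B := by rw [ENNReal.inv_mul_cancel hAne hAne_top, one_mul]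


/-- if `f` is a probability density with `∫_{1/2}^∞ dy/(y³ f(y)) < ∞`
and `qₙ = ∫_{n-1/2}^{n+1/2} f(y) dy`, then `qₙ > 0` for `n ≥ 1` and
`∑_{n≥1} 1/((n+1/2)³ qₙ) ≤ ∫_{1/2}^∞ dy/(y³ f(y))`. -/
theorem discretization_jensen_bound
    (f : ℝ → ℝ) (hf_meas : Measurable f) (hf_nonneg : ∀ y, 0 ≤ f y)
    (hf_int : Integrable f (volume : Measure ℝ))
    (hf_prob : ∫ y, f y = 1)
    (hI : ∫⁻ y in Set.Ici (2⁻¹ : ℝ), (ENNReal.ofReal (y ^ 3 * f y))⁻¹ < ⊤) :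
    (∀ n : ℕ, 1 ≤ n →
      0 < ∫ y in ((n : ℝ) - 2⁻¹)..((n : ℝ) + 2⁻¹), f y) ∧
    ∑' n : ℕ, (ENNReal.ofReal
        ((((n : ℝ) + 1) + 2⁻¹) ^ 3 *
          ∫ y in (((n : ℝ) + 1) - 2⁻¹)..(((n : ℝ) + 1) + 2⁻¹), f y))⁻¹
      ≤ ∫⁻ y in Set.Ici (2⁻¹ : ℝ), (ENNReal.ofReal (y ^ 3 * f y))⁻¹ := by
  set g : ℝ → ℝ≥0∞ := fun y => (ENNReal.ofReal (y ^ 3 * f y))⁻¹ with hg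
  set s : ℕ → Set ℝ := fun k => Set.Ico ((k:ℝ) + 2⁻¹) ((k:ℝ) + 1 + 2⁻¹) with hs
  -- union decomposition
  have hU : Set.Ici (2⁻¹:ℝ) = ⋃ k : ℕ, s k := by
    ext y
    simp only [hs, Set.mem_Ici, Set.mem_iUnion, Set.mem_Ico]
    constructor
    · intro hy
      refine ⟨⌊y - 2⁻¹⌋₊, ?_, ?_⟩
      · have h1 : (⌊y - 2⁻¹⌋₊ : ℝ) ≤ y - 2⁻¹ := Nat.floor_le (by linarith)
        linarith
      · have h2 : y - 2⁻¹ < ⌊y - 2⁻¹⌋₊ + 1 := Nat.lt_floor_add_one _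
        linarith
    · rintro ⟨k, h1, h2⟩
      have : (0:ℝ) ≤ k := Nat.cast_nonneg k
      linarith
  have hsm : ∀ k : ℕ, MeasurableSet (s k) := fun k => measurableSet_Ico
  have hdisj : Pairwise (Function.onFun Disjoint s) := by
    intro i j hij
    apply Set.disjoint_left.mpr
    intro x hx hx'
    simp only [hs, Set.mem_Ico] at hx hx'
    rcases lt_or_gt_of_ne hij with h | h
    · have : (i:ℝ) + 1 ≤ (j:ℝ) := by exact_mod_cast h
      linarith
    · have : (j:ℝ) + 1 ≤ (i:ℝ) := by exact_mod_cast h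
      linarith
  have hsplit : ∫⁻ y in Set.Ici (2⁻¹:ℝ), g y = ∑' k : ℕ, ∫⁻ y in s k, g y := by
    rw [hU, lintegral_iUnion hsm hdisj]
  -- per-interval bound
  have hterm : ∀ k : ℕ,
      (ENNReal.ofReal ((((k : ℝ) + 1) + 2⁻¹) ^ 3 *
        ∫ y in (((k : ℝ) + 1) - 2⁻¹)..(((k : ℝ) + 1) + 2⁻¹), f y))⁻¹
      ≤ ∫⁻ y in s k, g y := by
    intro k
    have e1 : ((k : ℝ) + 1) - 2⁻¹ = (k:ℝ) + 2⁻¹ := by ring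
    have hab : ((k:ℝ) + 2⁻¹) ≤ ((k:ℝ) + 1 + 2⁻¹) := by linarith
    rw [e1, intervalIntegral.integral_of_le hab, integral_Ioc_eq_integral_Ioo,
      ← integral_Ico_eq_integral_Ioo, ← integral_const_mul]
    have hKey := jensen_inv ((k:ℝ) + 2⁻¹) ((k:ℝ) + 1 + 2⁻¹) (by ring)
      (fun y => ((k:ℝ) + 1 + 2⁻¹) ^ 3 * f y)
      (hf_meas.const_mul _) (fun y => mul_nonneg (by positivity) (hf_nonneg y))
      ((hf_int.integrableOn).const_mul _)
    refine hKey.trans ?_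
    simp only [hs, hg]
    apply setLIntegral_mono
      (((measurable_id.pow_const 3).mul hf_meas).ennreal_ofReal.inv)
    intro y hy
    simp only [hs, Set.mem_Ico] at hy ⊢
    apply ENNReal.inv_le_inv.mpr
    apply ENNReal.ofReal_le_ofReal
    have hy0 : 0 ≤ y := by
      have : (0:ℝ) ≤ k := Nat.cast_nonneg k
      linarith [hy.1]
    have hy3 : y ^ 3 ≤ ((k:ℝ) + 1 + 2⁻¹) ^ 3 := pow_le_pow_left₀ hy0 hy.2.le 3
    exact mul_le_mul_of_nonneg_right hy3 (hf_nonneg y)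
  have hsum : ∑' n : ℕ, (ENNReal.ofReal
        ((((n : ℝ) + 1) + 2⁻¹) ^ 3 *
          ∫ y in (((n : ℝ) + 1) - 2⁻¹)..(((n : ℝ) + 1) + 2⁻¹), f y))⁻¹
      ≤ ∫⁻ y in Set.Ici (2⁻¹ : ℝ), g y := by
    rw [hsplit]
    exact ENNReal.tsum_le_tsum hterm
  refine ⟨?_, hsum⟩
  intro n hn
  have hfin := (ENNReal.le_tsum (n - 1)).trans_lt (hsum.trans_lt hI)
  have hcast : (((n - 1 : ℕ) : ℝ) + 1) = (n : ℝ) := by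
    have : (1:ℕ) ≤ n := hn
    push_cast [Nat.cast_sub this]
    ring
  rw [hcast] at hfin
  have hne : ENNReal.ofReal (((n : ℝ) + 2⁻¹) ^ 3 *
      ∫ y in ((n : ℝ) - 2⁻¹)..((n : ℝ) + 2⁻¹), f y) ≠ 0 := by
    intro h0
    rw [h0, ENNReal.inv_zero] at hfin
    exact (lt_irrefl _) hfin
  have hpos : 0 < ((n : ℝ) + 2⁻¹) ^ 3 *
      ∫ y in ((n : ℝ) - 2⁻¹)..((n : ℝ) + 2⁻¹), f y := by
    by_contra hle
    exact hne (ENNReal.ofReal_eq_zero.mpr (not_lt.mp hle))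
  have hc : (0:ℝ) < ((n : ℝ) + 2⁻¹) ^ 3 := by positivity
  nlinarith
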